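/- For every ρ ∈ [0,1), every x > 0 and every y with ρx < y ≤ x, defining α := α_{ρ,x,y} and β := α·x/y, one has P(S₁ > x, ρS₁ + √(1−ρ²)S₂ > y) = (1/(2π))·[I(α, x) + I(β, y)]. -/

import Mathlib

open MeasureTheory Filter

noncomputable def alphaRho (ρ x y : ℝ) : ℝ :=
  Real.sqrt (1 + (y / x - ρ) ^ 2 / (1 - ρ ^ 2))

noncomputable def tailI (F : ℝ → ℝ) (a x : ℝ) : ℝ :=
  ∫ s in Set.Ioi a, (1 - F (x * s)) / (s * Real.sqrt (s ^ 2 - 1))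

open Real Set

section AuxLemmas


section
variable {ρ x y : ℝ} (hρ0 : 0 ≤ ρ) (hρ1 : ρ < 1) (hx : 0 < x) (hxy : ρ * x < y)
include hρ0 hρ1 hx hxy

set_option linter.unusedSectionVars false

lemma hd' : 0 < 1 - ρ ^ 2 := by nlinarith

lemma hw' : 0 < y / x - ρ := by
  rw [sub_pos, lt_div_iff₀ hx]; linarith [hxy]

lemma alphaRho_sq : alphaRho ρ x y ^ 2 = 1 + (y / x - ρ) ^ 2 / (1 - ρ ^ 2) := by
  have hd := hd' hρ0 hρ1 hx hxy
  exact Real.sq_sqrt (by positivity)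

lemma one_lt_alphaRho : 1 < alphaRho ρ x y := by
  have hd := hd' hρ0 hρ1 hx hxy
  have hw := hw' hρ0 hρ1 hx hxy
  have h1 : (1:ℝ) < 1 + (y / x - ρ) ^ 2 / (1 - ρ ^ 2) := by
    have : 0 < (y / x - ρ) ^ 2 / (1 - ρ ^ 2) := by positivity
    linarith
  have := Real.sqrt_lt_sqrt (by norm_num) h1
  simpa [alphaRho] using this

variable (hyx : y ≤ x)
include hyx

lemma key_angle :
    Real.arccos (alphaRho ρ x y)⁻¹ + Real.arccos (y / (alphaRho ρ x y * x)) = Real.arccos ρ := by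
  set α := alphaRho ρ x y with hα
  have hd := hd' hρ0 hρ1 hx hxy
  have hw := hw' hρ0 hρ1 hx hxy
  have hα1 : 1 < α := one_lt_alphaRho hρ0 hρ1 hx hxy
  have hα0 : 0 < α := zero_lt_one.trans hα1
  have hy0 : 0 < y := lt_of_le_of_lt (mul_nonneg hρ0 hx.le) hxy
  have hρy : ρ * y < x := lt_of_le_of_lt (by nlinarith) (lt_of_lt_of_le hxy hyx)
  have hα2' : α ^ 2 * ((1 - ρ ^ 2) * x ^ 2) = (1 - ρ ^ 2) * x ^ 2 + (y - ρ * x) ^ 2 := by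
    rw [alphaRho_sq hρ0 hρ1 hx hxy]
    field_simp
  obtain ⟨s, hs0, h2⟩ : ∃ s : ℝ, 0 < s ∧ s ^ 2 = 1 - ρ ^ 2 :=
    ⟨Real.sqrt (1 - ρ ^ 2), Real.sqrt_pos.2 hd, Real.sq_sqrt hd.le⟩
  have hsrt : Real.sqrt (1 - ρ ^ 2) = s := by
    rw [← h2, Real.sqrt_sq hs0.le]
  have hu0 : 0 < α⁻¹ := by positivity
  have hu1 : α⁻¹ < 1 := by rw [inv_lt_one_iff₀]; right; exact hα1
  have hv0 : 0 < y / (α * x) := by positivity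
  have hv1 : y / (α * x) < 1 := by
    rw [div_lt_one (by positivity)]
    nlinarith
  have hs1 : Real.sqrt (1 - (α⁻¹) ^ 2) = (y / x - ρ) / (s * α) := by
    rw [show 1 - (α⁻¹) ^ 2 = ((y / x - ρ) / (s * α)) ^ 2 by
      field_simp
      linear_combination hα2' + ((α ^ 2 - 1) * x ^ 2) * h2]
    exact Real.sqrt_sq (by positivity)
  have hs2 : Real.sqrt (1 - (y / (α * x)) ^ 2) = (x - ρ * y) / (s * α * x) := by
    rw [show 1 - (y / (α * x)) ^ 2 = ((x - ρ * y) / (s * α * x)) ^ 2 by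
      field_simp
      linear_combination hα2' + (α ^ 2 * x ^ 2 - y ^ 2) * h2]
    exact Real.sqrt_sq (div_nonneg (by linarith) (by positivity))
  refine (Real.arccos_eq_of_eq_cos (add_nonneg (Real.arccos_nonneg _) (Real.arccos_nonneg _))
    ?_ ?_).symm
  · have l1 : Real.arccos α⁻¹ ≤ π / 2 := Real.arccos_le_pi_div_two.2 hu0.le
    have l2 : Real.arccos (y / (α * x)) ≤ π / 2 := Real.arccos_le_pi_div_two.2 hv0.le
    linarith
  · rw [Real.cos_add, Real.cos_arccos (by linarith) hu1.le,
      Real.cos_arccos (by linarith) hv1.le, Real.sin_arccos, Real.sin_arccos, hs1, hs2]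
    field_simp
    linear_combination ρ * hα2' + (ρ * α ^ 2 * x ^ 2 - y * x) * h2
end



lemma arccos_anti : Antitone Real.arccos := fun _ _ h =>
  sub_le_sub_left (Real.monotone_arcsin h) _

lemma deriv_arccos_inv {s : ℝ} (hs : 1 < s) :
    HasDerivAt (fun t : ℝ => Real.arccos t⁻¹) (1 / (s * Real.sqrt (s ^ 2 - 1))) s := by
  have hs0 : 0 < s := zero_lt_one.trans hs
  have hinv1 : s⁻¹ < 1 := inv_lt_one_of_one_lt₀ hs
  have hinv0 : 0 < s⁻¹ := by positivity
  have h1 := Real.hasDerivAt_arccos (by linarith : s⁻¹ ≠ -1) (ne_of_lt hinv1)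
  have h2 := hasDerivAt_inv (ne_of_gt hs0)
  have h := h1.comp s h2
  refine h.congr_deriv ?_
  have hsq : Real.sqrt (1 - (s⁻¹) ^ 2) = Real.sqrt (s ^ 2 - 1) / s := by
    rw [show 1 - (s⁻¹) ^ 2 = (s ^ 2 - 1) / s ^ 2 by field_simp,
      Real.sqrt_div (by nlinarith), Real.sqrt_sq hs0.le]
  rw [hsq]
  have h3 : Real.sqrt (s ^ 2 - 1) > 0 := Real.sqrt_pos.2 (by nlinarith)
  field_simp

lemma cont_g {a b : ℝ} (ha : 1 < a) :
    ContinuousOn (fun s : ℝ => 1 / (s * Real.sqrt (s ^ 2 - 1))) (Set.Icc a b) := by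
  apply ContinuousOn.div continuousOn_const
  · exact continuousOn_id.mul (Real.continuous_sqrt.comp_continuousOn (by fun_prop))
  · intro s hs
    have h1 : 1 < s := lt_of_lt_of_le ha hs.1
    have : (0:ℝ) < Real.sqrt (s ^ 2 - 1) := Real.sqrt_pos.2 (by nlinarith)
    positivity

lemma lint_g {a : ℝ} (ha : 1 < a) {b : ℝ} (hb : 0 < b) :
    ∫⁻ s in Set.Ioo a b, ENNReal.ofReal (1 / (s * Real.sqrt (s ^ 2 - 1)))
      = ENNReal.ofReal (Real.arccos b⁻¹ - Real.arccos a⁻¹) := by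
  rcases le_or_gt b a with hba | hab
  · rw [Set.Ioo_eq_empty hba.not_gt, Measure.restrict_empty, lintegral_zero_measure,
      Eq.comm, ENNReal.ofReal_eq_zero, sub_nonpos]
    exact arccos_anti (inv_anti₀ hb hba)
  · have hFTC : ∫ s in a..b, 1 / (s * Real.sqrt (s ^ 2 - 1))
        = Real.arccos b⁻¹ - Real.arccos a⁻¹ := by
      apply intervalIntegral.integral_eq_sub_of_hasDerivAt
      · intro t ht
        rw [Set.uIcc_of_le hab.le] at ht
        exact deriv_arccos_inv (lt_of_lt_of_le ha ht.1)
      · apply ContinuousOn.intervalIntegrable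
        rw [Set.uIcc_of_le hab.le]
        exact cont_g ha
    have hInt : IntegrableOn (fun s : ℝ => 1 / (s * Real.sqrt (s ^ 2 - 1))) (Set.Ioo a b) :=
      ((cont_g ha).integrableOn_Icc).mono_set Set.Ioo_subset_Icc_self
    have hnn : 0 ≤ᵐ[volume.restrict (Set.Ioo a b)]
        fun s : ℝ => 1 / (s * Real.sqrt (s ^ 2 - 1)) := by
      rw [EventuallyLE, ae_restrict_iff' measurableSet_Ioo]
      filter_upwards with s hs
      have h1 : 1 < s := ha.trans hs.1
      have : (0:ℝ) < Real.sqrt (s ^ 2 - 1) := Real.sqrt_pos.2 (by nlinarith)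
      positivity
    rw [← ofReal_integral_eq_lintegral_ofReal hInt hnn, ← hFTC,
      intervalIntegral.integral_of_le hab.le, integral_Ioc_eq_integral_Ioo]

lemma J_eq (ν : Measure ℝ) [IsProbabilityMeasure ν] (hν0 : ν (Set.Iic 0) = 0)
    {z a : ℝ} (hz : 0 < z) (ha : 1 < a) :
    ∫⁻ r, ENNReal.ofReal (Real.arccos (z / r) - Real.arccos a⁻¹) ∂ν
      = ∫⁻ s in Set.Ioi a,
          ν (Set.Ioi (z * s)) * ENNReal.ofReal (1 / (s * Real.sqrt (s ^ 2 - 1))) := by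
  set T : Set (ℝ × ℝ) := {p : ℝ × ℝ | a < p.2 ∧ z * p.2 < p.1} with hT
  have hTmeas : MeasurableSet T :=
    (measurableSet_lt measurable_const measurable_snd).inter
      (measurableSet_lt (measurable_snd.const_mul z) measurable_fst)
  set f : ℝ × ℝ → ENNReal :=
    fun p => ENNReal.ofReal (1 / (p.2 * Real.sqrt (p.2 ^ 2 - 1))) with hf
  have hfmeas : Measurable f := by
    apply ENNReal.measurable_ofReal.comp
    apply Measurable.div measurable_const
    exact measurable_snd.mul (Real.continuous_sqrt.measurable.comp (by fun_prop))
  set h : ℝ × ℝ → ENNReal := T.indicator f with hh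
  have hhmeas : Measurable h := hfmeas.indicator hTmeas
  have hae : ∀ᵐ r ∂ν, (0:ℝ) < r := by
    rw [ae_iff]
    convert hν0 using 2
    ext r; simp
  have step1 : ∫⁻ r, ENNReal.ofReal (Real.arccos (z / r) - Real.arccos a⁻¹) ∂ν
      = ∫⁻ r, ∫⁻ s, h (r, s) ∂volume ∂ν := by
    refine lintegral_congr_ae ?_
    filter_upwards [hae] with r hr
    have hset : {s : ℝ | (r, s) ∈ T} = Set.Ioo a (r / z) := by
      ext s
      simp only [hT, Set.mem_setOf_eq, Set.mem_Ioo]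
      constructor
      · rintro ⟨h1, h2⟩; exact ⟨h1, by rwa [lt_div_iff₀ hz, mul_comm]⟩
      · rintro ⟨h1, h2⟩; exact ⟨h1, by rwa [lt_div_iff₀ hz, mul_comm] at h2⟩
    have : ∀ s : ℝ, h (r, s) = (Set.Ioo a (r / z)).indicator
        (fun s => ENNReal.ofReal (1 / (s * Real.sqrt (s ^ 2 - 1)))) s := by
      intro s
      rw [hh, ← hset]
      by_cases hmem : (r, s) ∈ T <;>
        simp [Set.indicator, hmem, hf]
    rw [show (∫⁻ s, h (r, s) ∂volume) = ∫⁻ s, (Set.Ioo a (r / z)).indicator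
        (fun s => ENNReal.ofReal (1 / (s * Real.sqrt (s ^ 2 - 1)))) s ∂volume from
      lintegral_congr fun s => this s]
    rw [lintegral_indicator measurableSet_Ioo _, lint_g ha (by positivity), inv_div]
  have step2 : ∫⁻ r, ∫⁻ s, h (r, s) ∂volume ∂ν = ∫⁻ s, ∫⁻ r, h (r, s) ∂ν ∂volume :=
    lintegral_lintegral_swap (hhmeas.aemeasurable)
  have step3 : ∀ s : ℝ, (∫⁻ r, h (r, s) ∂ν) = (Set.Ioi a).indicator
      (fun s => ν (Set.Ioi (z * s)) * ENNReal.ofReal (1 / (s * Real.sqrt (s ^ 2 - 1)))) s := by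
    intro s
    by_cases has : a < s
    · have heq : ∀ r : ℝ, h (r, s) = (Set.Ioi (z * s)).indicator
          (fun _ => ENNReal.ofReal (1 / (s * Real.sqrt (s ^ 2 - 1)))) r := by
        intro r
        by_cases hmem : z * s < r
        · rw [hh, Set.indicator_of_mem (show (r, s) ∈ T from ⟨has, hmem⟩),
            Set.indicator_of_mem (Set.mem_Ioi.2 hmem)]
        · rw [hh, Set.indicator_of_notMem (fun hc : (r, s) ∈ T => hmem hc.2),
            Set.indicator_of_notMem (fun hc => hmem (Set.mem_Ioi.1 hc))]
      rw [lintegral_congr heq, lintegral_indicator_const measurableSet_Ioi,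
        Set.indicator_of_mem (Set.mem_Ioi.2 has), mul_comm]
    · have heq : ∀ r : ℝ, h (r, s) = 0 := by
        intro r
        rw [hh, Set.indicator_of_notMem (fun hc : (r, s) ∈ T => has hc.1)]
      rw [lintegral_congr heq, lintegral_zero,
        Set.indicator_of_notMem (fun hc => has (Set.mem_Ioi.1 hc))]
  rw [step1, step2, lintegral_congr step3, lintegral_indicator measurableSet_Ioi _]



lemma arccos_anti' : Antitone Real.arccos := fun _ _ h =>
  sub_le_sub_left (Real.monotone_arcsin h) _

lemma arccos_add_le' {ρ p q : ℝ} (hρ : -1 ≤ ρ) (hρ1 : ρ ≤ 1) (hp : -1 ≤ p) (hp1 : p ≤ 1)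
    (hsum : Real.arccos ρ + Real.arccos p ≤ π)
    (h : ρ * p - Real.sqrt (1 - ρ ^ 2) * Real.sqrt (1 - p ^ 2) ≤ q) :
    Real.arccos q ≤ Real.arccos ρ + Real.arccos p := by
  have hc : Real.cos (Real.arccos ρ + Real.arccos p)
      = ρ * p - Real.sqrt (1 - ρ ^ 2) * Real.sqrt (1 - p ^ 2) := by
    rw [Real.cos_add, Real.cos_arccos hρ hρ1, Real.cos_arccos hp hp1,
      Real.sin_arccos, Real.sin_arccos]
  calc Real.arccos q ≤ Real.arccos (Real.cos (Real.arccos ρ + Real.arccos p)) :=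
        arccos_anti' (hc ▸ h)
    _ = _ := Real.arccos_cos (add_nonneg (Real.arccos_nonneg _) (Real.arccos_nonneg _)) hsum

lemma abs_lt_arccos {t c : ℝ} (hc0 : 0 < c) (htπ : |t| ≤ π) (h : c < Real.cos t) :
    |t| < Real.arccos c := by
  by_contra hcon
  push_neg at hcon
  have h1 : Real.cos |t| ≤ Real.cos (Real.arccos c) := by
    rcases eq_or_lt_of_le hcon with he | hl
    · rw [he]
    · exact (Real.cos_lt_cos_of_nonneg_of_le_pi (Real.arccos_nonneg _) htπ hl).le
  rw [Real.cos_arccos (by linarith) (by nlinarith [Real.cos_le_one t]), Real.cos_abs] at h1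
  linarith

lemma cos_gt_of_abs_lt {t c : ℝ} (hc0 : -1 ≤ c) (hc1 : c ≤ 1) (h : |t| < Real.arccos c) :
    c < Real.cos t := by
  have h1 : Real.cos (Real.arccos c) < Real.cos |t| :=
    Real.cos_lt_cos_of_nonneg_of_le_pi (abs_nonneg _) (Real.arccos_le_pi _) h
  rwa [Real.cos_arccos hc0 hc1, Real.cos_abs] at h1

lemma slice_eq {ρ x y r : ℝ} (hρ0 : 0 ≤ ρ) (hρ1 : ρ < 1) (hx : 0 < x) (hxy : ρ * x < y)
    (hyx : y ≤ x) (hr : x < r) :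
    {θ : ℝ | x < r * Real.cos θ ∧ y < r * Real.cos (θ - Real.arccos ρ)} ∩ Set.Ioo (-π) π
      = Set.Ioo (Real.arccos ρ - Real.arccos (y / r)) (Real.arccos (x / r)) := by
  have hy0 : 0 < y := lt_of_le_of_lt (mul_nonneg hρ0 hx.le) hxy
  have hr0 : 0 < r := hx.trans hr
  have hxr1 : x / r < 1 := (div_lt_one hr0).2 hr
  have hxr0 : 0 < x / r := by positivity
  have hyr1 : y / r < 1 := (div_lt_one hr0).2 (lt_of_le_of_lt hyx hr)
  have hyr0 : 0 < y / r := by positivity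
  set φ := Real.arccos ρ with hφ
  set A := Real.arccos (x / r) with hA
  set B := Real.arccos (y / r) with hB
  have hφ0 : 0 ≤ φ := Real.arccos_nonneg _
  have hφπ : φ ≤ π / 2 := Real.arccos_le_pi_div_two.2 hρ0
  have hA2 : A < π / 2 := Real.arccos_lt_pi_div_two.2 hxr0
  have hA0 : 0 < A := Real.arccos_pos.2 hxr1
  have hB2 : B < π / 2 := Real.arccos_lt_pi_div_two.2 hyr0
  have hB0 : 0 < B := Real.arccos_pos.2 hyr1
  have hAπ : A ≤ π := Real.arccos_le_pi _
  have hBπ : B ≤ π := Real.arccos_le_pi _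
  have cosA : Real.cos A = x / r := Real.cos_arccos (by linarith) hxr1.le
  have cosB : Real.cos B = y / r := Real.cos_arccos (by linarith) hyr1.le
  have key1 : B ≤ φ + A := by
    apply arccos_add_le' (by linarith) hρ1.le (by linarith) hxr1.le (by linarith)
    have h1 : ρ * (x / r) ≤ y / r := by
      rw [← mul_div_assoc]
      gcongr

    nlinarith [Real.sqrt_nonneg (1 - ρ ^ 2), Real.sqrt_nonneg (1 - (x / r) ^ 2)]
  have key2 : A ≤ φ + B := by
    apply arccos_add_le' (by linarith) hρ1.le (by linarith) hyr1.le (by linarith)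
    have h1 : ρ * (y / r) ≤ x / r := by
      have : ρ * y ≤ x := by nlinarith
      rw [← mul_div_assoc]
      gcongr
    nlinarith [Real.sqrt_nonneg (1 - ρ ^ 2), Real.sqrt_nonneg (1 - (y / r) ^ 2)]
  ext θ
  simp only [Set.mem_inter_iff, Set.mem_setOf_eq, Set.mem_Ioo]
  constructor
  · rintro ⟨⟨h1, h2⟩, hθ1, hθ2⟩
    have hcos1 : x / r < Real.cos θ := (div_lt_iff₀ hr0).2 (by linarith [h1])
    have hcos2 : y / r < Real.cos (θ - φ) := (div_lt_iff₀ hr0).2 (by linarith [h2])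
    have hcosθ : 0 < Real.cos θ := lt_trans hxr0 hcos1
    have habs : |θ| < π / 2 := by
      by_contra hcon
      push_neg at hcon
      have : Real.cos |θ| ≤ 0 :=
        Real.cos_nonpos_of_pi_div_two_le_of_le hcon (by cases abs_cases θ <;> linarith)
      rw [Real.cos_abs] at this; linarith
    have hθA : |θ| < A := abs_lt_arccos hxr0 (by cases abs_cases θ <;> linarith) hcos1
    have hθB : |θ - φ| < B := by
      apply abs_lt_arccos hyr0 _ hcos2
      cases abs_cases (θ - φ) <;> cases abs_cases θ <;> linarith [Real.pi_pos]
    constructor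
    · have := abs_lt.1 hθB; linarith [this.1]
    · have := abs_lt.1 hθA; linarith [this.2]
  · rintro ⟨hθ1, hθ2⟩
    have habsA : |θ| < A := by
      rw [abs_lt]
      exact ⟨by linarith, hθ2⟩
    have habsB : |θ - φ| < B := by
      rw [abs_lt]
      constructor <;> [linarith; linarith]
    have hc1 : x / r < Real.cos θ := cos_gt_of_abs_lt (by linarith) hxr1.le habsA
    have hc2 : y / r < Real.cos (θ - φ) := cos_gt_of_abs_lt (by linarith) hyr1.le habsB
    refine ⟨⟨?_, ?_⟩, ?_, ?_⟩
    · have := (div_lt_iff₀ hr0).1 hc1; linarith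
    · have := (div_lt_iff₀ hr0).1 hc2; linarith
    · linarith [Real.pi_gt_three]
    · linarith [Real.pi_gt_three]

end AuxLemmas
theorem stmt7
    {Ω : Type*} [MeasurableSpace Ω] (μ : Measure Ω) [IsProbabilityMeasure μ]
    (R Θ : Ω → ℝ) (hRmeas : Measurable R) (hΘmeas : Measurable Θ)
    (hIndep : ProbabilityTheory.IndepFun R Θ μ)
    (hΘlaw : Measure.map Θ μ =
      (ENNReal.ofReal (2 * Real.pi))⁻¹ • volume.restrict (Set.Ioo (-Real.pi) Real.pi))
    (F : ℝ → ℝ) (hFdist : ∀ t : ℝ, F t = (μ {ω | R ω ≤ t}).toReal)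
    (hF0 : F 0 = 0) :
    ∀ ρ : ℝ, 0 ≤ ρ → ρ < 1 → ∀ x > (0 : ℝ), ∀ y : ℝ, ρ * x < y → y ≤ x →
      (μ {ω | x < R ω * Real.cos (Θ ω) ∧
          y < ρ * (R ω * Real.cos (Θ ω)) +
            Real.sqrt (1 - ρ ^ 2) * (R ω * Real.sin (Θ ω))}).toReal =
        (1 / (2 * Real.pi)) *
          (tailI F (alphaRho ρ x y) x + tailI F (alphaRho ρ x y * x / y) y) := by
  intro ρ hρ0 hρ1 x hx y hρxy hyx
  have hd : 0 < 1 - ρ ^ 2 := by nlinarith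
  have hy0 : 0 < y := lt_of_le_of_lt (mul_nonneg hρ0 hx.le) hρxy
  set φ := Real.arccos ρ with hφdef
  set α := alphaRho ρ x y with hαdef
  have hα1 : 1 < α := one_lt_alphaRho hρ0 hρ1 hx hρxy
  have hα0 : 0 < α := zero_lt_one.trans hα1
  set β := α * x / y with hβdef
  have hβinv : β⁻¹ = y / (α * x) := by rw [hβdef]; rw [inv_div]
  have hβ1 : 1 < β := by
    rw [hβdef, lt_div_iff₀ hy0]
    nlinarith
  have hαx : 0 < α * x := by positivity
  have hcosφ : Real.cos φ = ρ := Real.cos_arccos (by linarith) hρ1.le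
  have hsinφ : Real.sin φ = Real.sqrt (1 - ρ ^ 2) := Real.sin_arccos ρ
  have harr : ∀ θ r : ℝ, ρ * (r * Real.cos θ) + Real.sqrt (1 - ρ ^ 2) * (r * Real.sin θ)
      = r * Real.cos (θ - φ) := by
    intro θ r
    rw [Real.cos_sub, hcosφ, hsinφ]
    ring
  set S : Set (ℝ × ℝ) := {p : ℝ × ℝ | x < p.1 * Real.cos p.2 ∧ y < p.1 * Real.cos (p.2 - φ)}
    with hSdef
  have hS : MeasurableSet S := by
    apply MeasurableSet.inter
    · exact measurableSet_lt measurable_const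
        (measurable_fst.mul (Real.continuous_cos.measurable.comp measurable_snd))
    · exact measurableSet_lt measurable_const
        (measurable_fst.mul (Real.continuous_cos.measurable.comp
          (measurable_snd.sub measurable_const)))
  have hevent : {ω | x < R ω * Real.cos (Θ ω) ∧
      y < ρ * (R ω * Real.cos (Θ ω)) + Real.sqrt (1 - ρ ^ 2) * (R ω * Real.sin (Θ ω))}
      = (fun ω => (R ω, Θ ω)) ⁻¹' S := by
    ext ω
    simp only [Set.mem_setOf_eq, Set.mem_preimage, hSdef]
    rw [harr (Θ ω) (R ω)]
  set ν := μ.map R with hνdef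
  haveI : IsProbabilityMeasure ν := Measure.isProbabilityMeasure_map hRmeas.aemeasurable
  haveI : IsProbabilityMeasure (μ.map Θ) := Measure.isProbabilityMeasure_map hΘmeas.aemeasurable
  have hν0 : ν (Set.Iic 0) = 0 := by
    rw [hνdef, Measure.map_apply hRmeas measurableSet_Iic]
    have h1 : (μ (R ⁻¹' Set.Iic 0)).toReal = 0 := by
      rw [show R ⁻¹' Set.Iic 0 = {ω | R ω ≤ 0} from rfl, ← hFdist 0, hF0]
    rcases (ENNReal.toReal_eq_zero_iff _).1 h1 with h | h
    · exact h
    · exact absurd h (measure_ne_top μ _)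
  have hmap : μ.map (fun ω => (R ω, Θ ω)) = ν.prod (μ.map Θ) :=
    (ProbabilityTheory.indepFun_iff_map_prod_eq_prod_map_map hRmeas.aemeasurable
      hΘmeas.aemeasurable).1 hIndep
  have hμE : μ ((fun ω => (R ω, Θ ω)) ⁻¹' S) = ∫⁻ r, (μ.map Θ) (Prod.mk r ⁻¹' S) ∂ν := by
    rw [← Measure.map_apply (hRmeas.prodMk hΘmeas) hS, hmap, Measure.prod_apply hS]
  have hae : ∀ᵐ r ∂ν, (0:ℝ) < r := by
    rw [ae_iff]
    convert hν0 using 2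
    ext r; simp
  have hkey : Real.arccos α⁻¹ + Real.arccos β⁻¹ = φ := by
    rw [hβinv]; exact key_angle hρ0 hρ1 hx hρxy hyx
  have hA₀0 : 0 ≤ Real.arccos α⁻¹ := Real.arccos_nonneg _
  have hB₀0 : 0 ≤ Real.arccos β⁻¹ := Real.arccos_nonneg _
  have hαinv : α⁻¹ = x / (α * x) := by field_simp
  have hslice : ∀ᵐ r ∂ν, (μ.map Θ) (Prod.mk r ⁻¹' S)
      = (ENNReal.ofReal (2 * π))⁻¹ *
        (ENNReal.ofReal (Real.arccos (x / r) - Real.arccos α⁻¹)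
          + ENNReal.ofReal (Real.arccos (y / r) - Real.arccos β⁻¹)) := by
    filter_upwards [hae] with r hr
    have hpre : Prod.mk r ⁻¹' S
        = {θ : ℝ | x < r * Real.cos θ ∧ y < r * Real.cos (θ - φ)} := rfl
    rw [hpre, hΘlaw, Measure.smul_apply, smul_eq_mul,
      Measure.restrict_apply' measurableSet_Ioo]
    rcases le_or_gt r (α * x) with hcase | hcase
    · have hAle : Real.arccos (x / r) ≤ Real.arccos α⁻¹ := by
        apply arccos_anti
        rw [hαinv]
        gcongr
      have hBle : Real.arccos (y / r) ≤ Real.arccos β⁻¹ := by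
        apply arccos_anti
        rw [hβinv]
        gcongr
      rw [ENNReal.ofReal_of_nonpos (show Real.arccos (x / r) - Real.arccos α⁻¹ ≤ 0 by linarith),
        ENNReal.ofReal_of_nonpos (show Real.arccos (y / r) - Real.arccos β⁻¹ ≤ 0 by linarith),
        add_zero, mul_zero]
      rcases le_or_gt r x with hrx | hrx
      · have hempty : {θ : ℝ | x < r * Real.cos θ ∧ y < r * Real.cos (θ - φ)} = ∅ := by
          ext θ
          simp only [Set.mem_setOf_eq, Set.mem_empty_iff_false, iff_false, not_and]
          intro h1
          nlinarith [Real.cos_le_one θ]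
        rw [hempty, Set.empty_inter, measure_empty, mul_zero]
      · rw [slice_eq hρ0 hρ1 hx hρxy hyx hrx, Real.volume_Ioo,
          ENNReal.ofReal_of_nonpos (show Real.arccos (x / r) - (φ - Real.arccos (y / r)) ≤ 0
            by linarith), mul_zero]
    · have hrx : x < r := by nlinarith
      have hr0 : 0 < r := hx.trans hrx
      have hAge : Real.arccos α⁻¹ ≤ Real.arccos (x / r) := by
        apply arccos_anti
        rw [hαinv]
        gcongr
      have hBge : Real.arccos β⁻¹ ≤ Real.arccos (y / r) := by
        apply arccos_anti
        rw [hβinv]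
        gcongr
      rw [slice_eq hρ0 hρ1 hx hρxy hyx hrx, Real.volume_Ioo,
        ← ENNReal.ofReal_add (by linarith) (by linarith)]
      congr 2
      linarith
  have hmeas1 : Measurable fun r : ℝ =>
      ENNReal.ofReal (Real.arccos (x / r) - Real.arccos α⁻¹) := by
    apply ENNReal.measurable_ofReal.comp
    exact (Real.continuous_arccos.measurable.comp
      (measurable_const.div measurable_id)).sub measurable_const
  have hcne : (ENNReal.ofReal (2 * π))⁻¹ ≠ ⊤ :=
    ENNReal.inv_ne_top.2 (ENNReal.ofReal_pos.2 (by positivity)).ne'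
  have hμE2 : μ ((fun ω => (R ω, Θ ω)) ⁻¹' S)
      = (ENNReal.ofReal (2 * π))⁻¹ *
        ((∫⁻ r, ENNReal.ofReal (Real.arccos (x / r) - Real.arccos α⁻¹) ∂ν)
          + ∫⁻ r, ENNReal.ofReal (Real.arccos (y / r) - Real.arccos β⁻¹) ∂ν) := by
    rw [hμE, lintegral_congr_ae hslice, lintegral_const_mul' _ _ hcne,
      lintegral_add_left hmeas1]
  rw [J_eq ν hν0 hx hα1, J_eq ν hν0 hy0 hβ1] at hμE2
  set K₁ := ∫⁻ s in Set.Ioi α,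
    ν (Set.Ioi (x * s)) * ENNReal.ofReal (1 / (s * Real.sqrt (s ^ 2 - 1))) with hK₁def
  set K₂ := ∫⁻ s in Set.Ioi β,
    ν (Set.Ioi (y * s)) * ENNReal.ofReal (1 / (s * Real.sqrt (s ^ 2 - 1))) with hK₂def
  have hsum_ne : K₁ + K₂ ≠ ⊤ := by
    intro htop
    have hc0 : (ENNReal.ofReal (2 * π))⁻¹ ≠ 0 := ENNReal.inv_ne_zero.2 ENNReal.ofReal_ne_top
    rw [htop, ENNReal.mul_top hc0] at hμE2
    exact absurd hμE2 (measure_ne_top μ _)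
  have hK1ne : K₁ ≠ ⊤ := (ENNReal.add_ne_top.1 hsum_ne).1
  have hK2ne : K₂ ≠ ⊤ := (ENNReal.add_ne_top.1 hsum_ne).2
  have hFmono : Monotone F := by
    intro a b hab
    rw [hFdist a, hFdist b]
    exact ENNReal.toReal_mono (measure_ne_top μ _) (measure_mono fun ω h => le_trans h hab)
  have hFle1 : ∀ t, F t ≤ 1 := by
    intro t
    rw [hFdist t]
    calc (μ {ω | R ω ≤ t}).toReal ≤ (μ Set.univ).toReal :=
          ENNReal.toReal_mono (measure_ne_top μ _) (measure_mono (Set.subset_univ _))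
      _ = 1 := by rw [measure_univ, ENNReal.toReal_one]
  have htail : ∀ t : ℝ, ENNReal.ofReal (1 - F t) = ν (Set.Ioi t) := by
    intro t
    have h1 : ν (Set.Ioi t) = 1 - ν (Set.Iic t) := by
      rw [hνdef, Measure.map_apply hRmeas measurableSet_Ioi,
        Measure.map_apply hRmeas measurableSet_Iic,
        show R ⁻¹' Set.Ioi t = (R ⁻¹' Set.Iic t)ᶜ by ext ω; simp,
        measure_compl (hRmeas measurableSet_Iic) (measure_ne_top μ _), measure_univ]
    have h2 : F t = (ν (Set.Iic t)).toReal := by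
      rw [hFdist t, hνdef, Measure.map_apply hRmeas measurableSet_Iic]
      rfl
    have ha1 : ν (Set.Iic t) ≤ 1 := prob_le_one
    rw [h1, h2, show (1:ℝ) - (ν (Set.Iic t)).toReal = ((1 : ENNReal) - ν (Set.Iic t)).toReal by
        rw [ENNReal.toReal_sub_of_le ha1 ENNReal.one_ne_top, ENNReal.toReal_one],
      ENNReal.ofReal_toReal (ne_top_of_le_ne_top ENNReal.one_ne_top tsub_le_self)]
  have htailI : ∀ z : ℝ, 0 < z → ∀ a : ℝ, 1 < a →
      tailI F a z = (∫⁻ s in Set.Ioi a,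
        ν (Set.Ioi (z * s)) * ENNReal.ofReal (1 / (s * Real.sqrt (s ^ 2 - 1)))).toReal := by
    intro z hz a ha
    have hmeasD : Measurable fun s : ℝ => (1 - F (z * s)) / (s * Real.sqrt (s ^ 2 - 1)) := by
      apply Measurable.div
      · exact ((hFmono.measurable).comp (measurable_id.const_mul z)).const_sub 1
      · exact measurable_id.mul (Real.continuous_sqrt.measurable.comp (by fun_prop))
    have hnn : 0 ≤ᵐ[volume.restrict (Set.Ioi a)]
        fun s : ℝ => (1 - F (z * s)) / (s * Real.sqrt (s ^ 2 - 1)) := by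
      rw [EventuallyLE, ae_restrict_iff' measurableSet_Ioi]
      filter_upwards with s hs
      have h1 : (1:ℝ) < s := ha.trans hs
      have h2 := hFle1 (z * s)
      have h3 : 0 ≤ Real.sqrt (s ^ 2 - 1) := Real.sqrt_nonneg _
      exact div_nonneg (by linarith) (by positivity)
    rw [tailI, integral_eq_lintegral_of_nonneg_ae hnn hmeasD.aestronglyMeasurable]
    congr 1
    apply setLIntegral_congr_fun_ae measurableSet_Ioi
    filter_upwards with s hs
    have h1 : (1:ℝ) < s := ha.trans hs
    have hD : 0 < Real.sqrt (s ^ 2 - 1) := Real.sqrt_pos.2 (by nlinarith)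
    rw [div_eq_mul_inv, ENNReal.ofReal_mul (by linarith [hFle1 (z * s)]), htail (z * s),
      ← one_div]
  rw [hevent, hμE2, ENNReal.toReal_mul, ENNReal.toReal_add hK1ne hK2ne,
    ENNReal.toReal_inv, ENNReal.toReal_ofReal (by positivity),
    htailI x hx α hα1, htailI y hy0 β hβ1, one_div]
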